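/- Let c, e : [0,∞) → ℝ be bounded continuous functions with e(t) ≥ 0 for all t ≥ 0 and inf_{t≥0} c(t) ≥ c⋆ for some constant c⋆ > 0, set D(t) = e(t) − c(t), and let p : [0,∞) → ℝ be a differentiable solution of the time-varying Levins model p'(t) = c(t)·p(t)·(1 − p(t)) − e(t)·p(t) with p(0) ∈ (0,1]. If the upper Bohl exponent satisfies β⁺(D) < 0, then the metapopulation is persistent: liminf_{t→+∞} p(t) > 0. -/

import Mathlib

open Filter Set

/-- Transition operator of the scalar linear equation `x' = D t * x`. -/
noncomputable def Phi (D : ℝ → ℝ) (t s : ℝ) : ℝ :=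
  Real.exp (∫ τ in s..t, D τ)

/-- Average of `D` over the interval from `q.1` to `q.2`. -/
noncomputable def bohlAvg (D : ℝ → ℝ) (q : ℝ × ℝ) : ℝ :=
  (q.2 - q.1)⁻¹ * ∫ τ in q.1..q.2, D τ

/-- The filter describing `t - s → +∞` with `t > s ≥ 0` for pairs `q = (s, t)`. -/
def bohlFilter : Filter (ℝ × ℝ) :=
  (Filter.atTop.comap fun q : ℝ × ℝ => q.2 - q.1) ⊓
    Filter.principal {q : ℝ × ℝ | 0 ≤ q.1 ∧ q.1 < q.2}

/-- Upper Bohl exponent of `D`. -/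
noncomputable def bohlUpper (D : ℝ → ℝ) : ℝ :=
  Filter.limsup (bohlAvg D) bohlFilter

/-- Lower Bohl exponent of `D`. -/
noncomputable def bohlLower (D : ℝ → ℝ) : ℝ :=
  Filter.liminf (bohlAvg D) bohlFilter

private lemma primitive_hasDerivAt' {f : ℝ → ℝ} (hf : Continuous f) (t : ℝ) :
    HasDerivAt (fun u => ∫ x in (0:ℝ)..u, f x) (f t) t :=
  intervalIntegral.integral_hasDerivAt_right (hf.intervalIntegrable _ _)
    (hf.stronglyMeasurableAtFilter _ _) hf.continuousAt

private lemma exp_int_bound' {α t : ℝ} (hα : 0 < α) :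
    ∫ s in (0:ℝ)..t, Real.exp (-(α * (t - s))) ≤ α⁻¹ := by
  have hfun : (fun s : ℝ => -(α * (t - s))) = fun s => α * s - α * t := by funext s; ring
  have hF : ∀ s : ℝ, HasDerivAt (fun s : ℝ => α⁻¹ * Real.exp (-(α * (t - s))))
      (Real.exp (-(α * (t - s)))) s := by
    intro s
    have h1 : HasDerivAt (fun s : ℝ => -(α * (t - s))) α s := by
      rw [hfun]
      simpa using ((hasDerivAt_id s).const_mul α).sub_const (α * t)
    have := (h1.exp).const_mul α⁻¹
    refine this.congr_deriv ?_
    show α⁻¹ * (Real.exp (-(α * (t - s))) * α) = _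
    rw [mul_comm (Real.exp _) α, ← mul_assoc, inv_mul_cancel₀ hα.ne', one_mul]
  have hcont : Continuous fun s : ℝ => Real.exp (-(α * (t - s))) := by continuity
  have := intervalIntegral.integral_eq_sub_of_hasDerivAt
    (f := fun s : ℝ => α⁻¹ * Real.exp (-(α * (t - s))))
    (fun x _ => hF x) (hcont.intervalIntegrable 0 t)
  rw [this]
  show α⁻¹ * Real.exp (-(α * (t - t))) - α⁻¹ * Real.exp (-(α * (t - 0))) ≤ α⁻¹
  have h2 : Real.exp (-(α * (t - t))) = 1 := by norm_num
  have h3 : (0:ℝ) < Real.exp (-(α * (t - 0))) := Real.exp_pos _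
  nlinarith [inv_pos.2 hα]

set_option maxHeartbeats 1600000 in
/-- Persistence: if the colonization rate is bounded below by `c⋆ > 0` and
`β⁺(e - c) < 0`, then the fraction of occupied patches satisfies
`liminf_{t→∞} p t > 0`. -/
theorem levins_persistence (c e : ℝ → ℝ) (cstar : ℝ) (hcstar : 0 < cstar)
    (hc_cont : ContinuousOn c (Set.Ici 0)) (he_cont : ContinuousOn e (Set.Ici 0))
    (hc_bdd : ∃ M, ∀ t, 0 ≤ t → |c t| ≤ M) (he_bdd : ∃ M, ∀ t, 0 ≤ t → |e t| ≤ M)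
    (hc_lb : ∀ t, 0 ≤ t → cstar ≤ c t) (he_nonneg : ∀ t, 0 ≤ t → 0 ≤ e t)
    (D : ℝ → ℝ) (hD : ∀ t, D t = e t - c t)
    (p : ℝ → ℝ)
    (hp : ∀ t, 0 ≤ t → HasDerivAt p (c t * p t * (1 - p t) - e t * p t) t)
    (hp0 : p 0 ∈ Set.Ioc (0 : ℝ) 1)
    (hB : bohlUpper D < 0) :
    0 < Filter.liminf p Filter.atTop := by
  obtain ⟨Mc, hMc⟩ := hc_bdd
  obtain ⟨Me, hMe⟩ := he_bdd
  have hMc0 : 0 ≤ Mc := le_trans (abs_nonneg _) (hMc 0 le_rfl)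
  have hMe0 : 0 ≤ Me := le_trans (abs_nonneg _) (hMe 0 le_rfl)
  -- extended coefficients
  set N : ℝ → ℝ := fun t => max t 0 with hNdef
  have hNc : Continuous N := continuous_id.max continuous_const
  have hNmem : ∀ t, N t ∈ Set.Ici (0:ℝ) := fun t => show (0:ℝ) ≤ max t 0 from le_max_right _ _
  have hNeq : ∀ t, 0 ≤ t → N t = t := fun t ht => max_eq_left ht
  set cc : ℝ → ℝ := fun t => c (N t) with hccdef
  set ee : ℝ → ℝ := fun t => e (N t) with heedef
  have hcc : Continuous cc := hc_cont.comp_continuous hNc hNmem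
  have hee : Continuous ee := he_cont.comp_continuous hNc hNmem
  have hcceq : ∀ t, 0 ≤ t → cc t = c t := fun t ht => by simp [hccdef, hNeq t ht]
  have heeeq : ∀ t, 0 ≤ t → ee t = e t := fun t ht => by simp [heedef, hNeq t ht]
  have hccb : ∀ t, |cc t| ≤ Mc := fun t => hMc _ (hNmem t)
  have heeb : ∀ t, |ee t| ≤ Me := fun t => hMe _ (hNmem t)
  have hccpos : ∀ t, cstar ≤ cc t := fun t => hc_lb _ (hNmem t)
  have heepos : ∀ t, 0 ≤ ee t := fun t => he_nonneg _ (hNmem t)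
  -- continuity of p on Ici 0
  have hpc : ∀ t, 0 ≤ t → ContinuousAt p t := fun t ht => (hp t ht).continuousAt
  have hpcOn : ContinuousOn p (Set.Ici 0) := fun t ht => (hpc t ht).continuousWithinAt
  set pp : ℝ → ℝ := fun t => p (N t) with hppdef
  have hppc : Continuous pp := hpcOn.comp_continuous hNc hNmem
  have hppeq : ∀ t, 0 ≤ t → pp t = p t := fun t ht => by simp [hppdef, hNeq t ht]
  -- Step 1 : positivity of p
  set φ : ℝ → ℝ := fun t => cc t * (1 - pp t) - ee t with hφdef
  have hφc : Continuous φ := (hcc.mul (continuous_const.sub hppc)).sub hee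
  set A : ℝ → ℝ := fun t => ∫ x in (0:ℝ)..t, φ x with hAdef
  have hA : ∀ t, HasDerivAt A (φ t) t := primitive_hasDerivAt' hφc
  have key1 : ∀ t, 0 ≤ t → p t * Real.exp (-A t) = p 0 * Real.exp (-A 0) := by
    intro t ht
    refine constant_of_has_deriv_right_zero (f := fun s => p s * Real.exp (-A s))
      (a := 0) (b := t) ?_ ?_ t ⟨ht, le_rfl⟩
    · intro s hs
      exact ((hpc s hs.1).mul ((hA s).continuousAt.neg.rexp)).continuousWithinAt
    · intro x hx
      have h1 := hp x hx.1
      have h2 : HasDerivAt (fun s => Real.exp (-A s)) (Real.exp (-A x) * (-φ x)) x :=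
        (hA x).neg.exp
      have h3 := h1.mul h2
      have : (c x * p x * (1 - p x) - e x * p x) * Real.exp (-A x)
          + p x * (Real.exp (-A x) * (-φ x)) = 0 := by
        simp only [hφdef, hcceq x hx.1, heeeq x hx.1, hppeq x hx.1]
        ring
      rw [this] at h3
      exact h3.hasDerivWithinAt
  have hppos : ∀ t, 0 ≤ t → 0 < p t := by
    intro t ht
    have h := key1 t ht
    have h1 : 0 < p 0 * Real.exp (-A 0) := mul_pos hp0.1 (Real.exp_pos _)
    nlinarith [Real.exp_pos (-A t)]
  -- Step 2 : p ≤ 1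
  set A2 : ℝ → ℝ := fun t => ∫ x in (0:ℝ)..t, cc x * pp x with hA2def
  have hA2 : ∀ t, HasDerivAt A2 (cc t * pp t) t := primitive_hasDerivAt' (hcc.mul hppc)
  have hA2c : Continuous A2 := by
    rw [continuous_iff_continuousAt]; exact fun t => (hA2 t).continuousAt
  have hle1 : ∀ t, 0 ≤ t → p t ≤ 1 := by
    intro t ht
    have hanti : AntitoneOn (fun s => (p s - 1) * Real.exp (A2 s)) (Set.Ici 0) := by
      refine antitoneOn_of_deriv_nonpos (convex_Ici 0) ?_ ?_ ?_
      · intro s hs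
        exact (((hpc s hs).sub continuousAt_const).mul (hA2c.continuousAt).rexp).continuousWithinAt
      · intro x hx
        rw [interior_Ici] at hx
        exact (((hp x (le_of_lt hx)).sub_const 1).mul (hA2 x).exp).differentiableAt.differentiableWithinAt
      · intro x hx
        rw [interior_Ici] at hx
        have hx0 : (0:ℝ) ≤ x := le_of_lt hx
        have hd := ((hp x hx0).sub_const 1).mul (hA2 x).exp
        rw [show (fun s => (p s - 1) * Real.exp (A2 s)) = ((fun x => p x - 1) * fun x => Real.exp (A2 x)) from rfl, hd.deriv]
        have : (c x * p x * (1 - p x) - e x * p x) * Real.exp (A2 x)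
            + (p x - 1) * (Real.exp (A2 x) * (cc x * pp x))
            = -(e x * p x) * Real.exp (A2 x) := by
          rw [hcceq x hx0, hppeq x hx0]; ring
        rw [this]
        exact mul_nonpos_of_nonpos_of_nonneg
          (neg_nonpos.2 (mul_nonneg (he_nonneg x hx0) (hppos x hx0).le))
          (Real.exp_pos _).le
    have hmono : (p t - 1) * Real.exp (A2 t) ≤ (p 0 - 1) * Real.exp (A2 0) :=
      hanti (self_mem_Ici) ht ht
    have h0 : (p 0 - 1) * Real.exp (A2 0) ≤ 0 :=
      mul_nonpos_of_nonpos_of_nonneg (sub_nonpos.2 hp0.2) (Real.exp_pos _).le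
    nlinarith [Real.exp_pos (A2 t)]
  -- Step 3 : variation of constants for u = 1/p
  set u : ℝ → ℝ := fun t => (p t)⁻¹ with hudef
  set DD : ℝ → ℝ := fun t => ee t - cc t with hDDdef
  have hDDc : Continuous DD := hee.sub hcc
  have hDDeq : ∀ t, 0 ≤ t → DD t = D t := by
    intro t ht; rw [hDDdef]; simp only [hD t, hcceq t ht, heeeq t ht]
  set I2 : ℝ → ℝ := fun t => ∫ x in (0:ℝ)..t, DD x with hI2def
  have hI2 : ∀ t, HasDerivAt I2 (DD t) t := primitive_hasDerivAt' hDDc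
  have hI2c : Continuous I2 := by
    rw [continuous_iff_continuousAt]; exact fun t => (hI2 t).continuousAt
  have hJc : Continuous fun s => cc s * Real.exp (-I2 s) := hcc.mul (hI2c.neg.rexp)
  set J : ℝ → ℝ := fun t => ∫ x in (0:ℝ)..t, cc x * Real.exp (-I2 x) with hJdef
  have hJ : ∀ t, HasDerivAt J (cc t * Real.exp (-I2 t)) t := primitive_hasDerivAt' hJc
  have key2 : ∀ t, 0 ≤ t → u t * Real.exp (-I2 t) - J t = u 0 * Real.exp (-I2 0) - J 0 := by
    intro t ht
    refine constant_of_has_deriv_right_zero (f := fun s => u s * Real.exp (-I2 s) - J s)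
      (a := 0) (b := t) ?_ ?_ t ⟨ht, le_rfl⟩
    · intro s hs
      exact ((((hpc s hs.1).inv₀ (hppos s hs.1).ne').mul
        (hI2c.continuousAt.neg.rexp)).sub (hJ s).continuousAt).continuousWithinAt
    · intro x hx
      have hx0 : (0:ℝ) ≤ x := hx.1
      have hpne : p x ≠ 0 := (hppos x hx0).ne'
      have hu : HasDerivAt u (-(c x * p x * (1 - p x) - e x * p x) / p x ^ 2) x :=
        (hp x hx0).inv hpne
      have hE : HasDerivAt (fun s => Real.exp (-I2 s)) (Real.exp (-I2 x) * (-DD x)) x :=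
        (hI2 x).neg.exp
      have hd := (hu.mul hE).sub (hJ x)
      have : -(c x * p x * (1 - p x) - e x * p x) / p x ^ 2 * Real.exp (-I2 x)
          + u x * (Real.exp (-I2 x) * (-DD x)) - cc x * Real.exp (-I2 x) = 0 := by
        rw [hudef, hDDdef]
        simp only [hcceq x hx0, heeeq x hx0]
        field_simp
        ring
      rw [this] at hd
      exact hd.hasDerivWithinAt
  -- Bohl exponent estimate
  set α : ℝ := -(bohlUpper D) / 2 with hαdef
  have hα : 0 < α := by rw [hαdef]; linarith
  have hBα : bohlUpper D < -α := by rw [hαdef]; linarith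
  set M : ℝ := Mc + Me with hMdef
  have hM0 : 0 ≤ M := by rw [hMdef]; linarith
  have hDb : ∀ x, 0 ≤ x → |D x| ≤ M := by
    intro x hx
    rw [hD x, hMdef]
    calc |e x - c x| ≤ |e x| + |c x| := abs_sub _ _
      _ ≤ Mc + Me := by have := hMc x hx; have := hMe x hx; linarith
  have hDDb : ∀ x, |DD x| ≤ M := by
    intro x
    rw [hDDdef, hMdef]
    calc |ee x - cc x| ≤ |ee x| + |cc x| := abs_sub _ _
      _ ≤ Mc + Me := by have := hccb x; have := heeb x; linarith
  have hintb : ∀ s t : ℝ, 0 ≤ s → s ≤ t → |∫ x in s..t, D x| ≤ M * (t - s) := by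
    intro s t hs hst
    have h := intervalIntegral.norm_integral_le_of_norm_le_const (C := M)
      (f := D) (a := s) (b := t) ?_
    · rwa [Real.norm_eq_abs, abs_of_nonneg (by linarith : (0:ℝ) ≤ t - s)] at h
    · intro x hx
      rw [Set.uIoc_of_le hst] at hx
      exact hDb x (le_trans hs hx.1.le)
  have hbdd : Filter.IsBoundedUnder (· ≤ ·) bohlFilter (bohlAvg D) := by
    refine ⟨M, ?_⟩
    rw [eventually_map, bohlFilter, eventually_inf_principal]
    refine Eventually.of_forall ?_
    rintro ⟨s, t⟩ ⟨hs, hst⟩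
    have h1 : (0:ℝ) < t - s := by simpa using sub_pos.2 hst
    have h2 := hintb s t hs hst.le
    rw [bohlAvg]
    simp only []
    calc (t - s)⁻¹ * ∫ x in s..t, D x ≤ (t - s)⁻¹ * (M * (t - s)) := by
          apply mul_le_mul_of_nonneg_left _ (inv_pos.2 h1).le
          exact le_trans (le_abs_self _) h2
      _ = M := by field_simp
  have hev : ∀ᶠ q in bohlFilter, bohlAvg D q < -α :=
    Filter.eventually_lt_of_limsup_lt hBα hbdd
  rw [bohlFilter, eventually_inf_principal, Filter.eventually_comap, eventually_atTop] at hev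
  obtain ⟨T, hT⟩ := hev
  set T0 : ℝ := max T 1 with hT0def
  have hT01 : (1:ℝ) ≤ T0 := le_max_right _ _
  have hT00 : (0:ℝ) < T0 := lt_of_lt_of_le one_pos hT01
  have hkey : ∀ s t : ℝ, 0 ≤ s → s < t → T0 ≤ t - s →
      (∫ x in s..t, D x) ≤ -α * (t - s) := by
    intro s t hs hst hTst
    have h1 : (0:ℝ) < t - s := sub_pos.2 hst
    have h2 := hT (t - s) (le_trans (le_max_left _ _) hTst) (s, t) rfl ⟨hs, hst⟩
    rw [bohlAvg] at h2
    simp only [] at h2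
    have h3 := (mul_lt_mul_of_pos_left h2 h1).le
    rw [← mul_assoc, mul_inv_cancel₀ h1.ne', one_mul] at h3
    linarith [h3]
  set C : ℝ := (M + α) * T0 with hCdef
  have hC0 : 0 ≤ C := mul_nonneg (by linarith) hT00.le
  have hDDint : ∀ s t : ℝ, 0 ≤ s → 0 ≤ t → (∫ x in s..t, DD x) = ∫ x in s..t, D x := by
    intro s t hs ht
    apply intervalIntegral.integral_congr
    intro x hx
    have hx0 : 0 ≤ x := by
      rcases le_total s t with h | h
      · rw [Set.uIcc_of_le h] at hx; exact le_trans hs hx.1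
      · rw [Set.uIcc_of_ge h] at hx; exact le_trans ht hx.1
    exact hDDeq x hx0
  have hest : ∀ s t : ℝ, 0 ≤ s → s ≤ t → (∫ x in s..t, DD x) ≤ -α * (t - s) + C := by
    intro s t hs hst
    rw [hDDint s t hs (le_trans hs hst)]
    rcases le_or_gt T0 (t - s) with h | h
    · have hlt : s < t := by linarith
      have := hkey s t hs hlt h
      linarith
    · have h2 := hintb s t hs hst
      have h3 : (∫ x in s..t, D x) ≤ M * (t - s) := le_trans (le_abs_self _) h2
      have : M * (t - s) ≤ -α * (t - s) + C := by
        rw [hCdef]; nlinarith [sub_nonneg.2 hst]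
      linarith
  set K : ℝ := Real.exp C with hKdef
  have hK0 : 0 < K := Real.exp_pos _
  have hPhi : ∀ s t : ℝ, 0 ≤ s → s ≤ t →
      Real.exp (∫ x in s..t, DD x) ≤ K * Real.exp (-(α * (t - s))) := by
    intro s t hs hst
    rw [hKdef, ← Real.exp_add]
    apply Real.exp_le_exp.2
    have := hest s t hs hst
    linarith
  -- final bound on u
  set U : ℝ := K * u 0 + Mc * K * α⁻¹ with hUdef
  have hu00 : 0 < u 0 := inv_pos.2 hp0.1
  have hU0 : 0 < U := by
    rw [hUdef]
    have : 0 ≤ Mc * K * α⁻¹ := by positivity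
    nlinarith
  have hI20 : I2 0 = 0 := intervalIntegral.integral_same
  have hJ0 : J 0 = 0 := intervalIntegral.integral_same
  have hubound : ∀ t, 0 ≤ t → u t ≤ U := by
    intro t ht
    have h := key2 t ht
    rw [hI20, hJ0] at h
    simp only [neg_zero, Real.exp_zero, mul_one, sub_zero] at h
    -- u t = exp(I2 t) * (u 0 + J t)
    have hform : u t = Real.exp (I2 t) * u 0 + Real.exp (I2 t) * J t := by
      have hE : Real.exp (-I2 t) ≠ 0 := (Real.exp_pos _).ne'
      have : u t * Real.exp (-I2 t) = u 0 + J t := by linarith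
      calc u t = u t * Real.exp (-I2 t) * Real.exp (I2 t) := by
            rw [mul_assoc, ← Real.exp_add]; simp
        _ = (u 0 + J t) * Real.exp (I2 t) := by rw [this]
        _ = Real.exp (I2 t) * u 0 + Real.exp (I2 t) * J t := by ring
    have hI2t : Real.exp (I2 t) ≤ K := by
      have h1 : (I2 t) = ∫ x in (0:ℝ)..t, DD x := rfl
      have h2 := hest 0 t le_rfl ht
      rw [hI2def]
      calc Real.exp (∫ x in (0:ℝ)..t, DD x) ≤ Real.exp (-α * (t - 0) + C) := Real.exp_le_exp.2 h2
        _ ≤ Real.exp C := Real.exp_le_exp.2 (by nlinarith)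
        _ = K := rfl
    have hterm1 : Real.exp (I2 t) * u 0 ≤ K * u 0 :=
      mul_le_mul_of_nonneg_right hI2t hu00.le
    have hterm2 : Real.exp (I2 t) * J t ≤ Mc * K * α⁻¹ := by
      rw [hJdef]
      rw [← intervalIntegral.integral_const_mul]
      have hle : ∀ x ∈ Set.Icc (0:ℝ) t,
          Real.exp (I2 t) * (cc x * Real.exp (-I2 x)) ≤ Mc * K * Real.exp (-(α * (t - x))) := by
        intro x hx
        have hdiff : I2 t - I2 x = ∫ y in x..t, DD y := by
          rw [hI2def]
          simp only []
          rw [intervalIntegral.integral_interval_sub_left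
            (hDDc.intervalIntegrable 0 t) (hDDc.intervalIntegrable 0 x)]
        have heq : Real.exp (I2 t) * (cc x * Real.exp (-I2 x))
            = cc x * Real.exp (I2 t - I2 x) := by
          rw [sub_eq_add_neg, Real.exp_add]; ring
        rw [heq, hdiff]
        have h1 : cc x ≤ Mc := le_trans (le_abs_self _) (hccb x)
        have h2 := hPhi x t hx.1 hx.2
        have h3 : 0 ≤ cc x := le_trans hcstar.le (hccpos x)
        calc cc x * Real.exp (∫ y in x..t, DD y)
            ≤ Mc * (K * Real.exp (-(α * (t - x)))) :=
              mul_le_mul h1 h2 (Real.exp_pos _).le hMc0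
          _ = Mc * K * Real.exp (-(α * (t - x))) := by ring
      have hint1 : IntervalIntegrable (fun x => Real.exp (I2 t) * (cc x * Real.exp (-I2 x)))
          MeasureTheory.volume 0 t := (continuous_const.mul hJc).intervalIntegrable 0 t
      have hint2 : IntervalIntegrable (fun x => Mc * K * Real.exp (-(α * (t - x))))
          MeasureTheory.volume 0 t := by
        exact (continuous_const.mul (((continuous_const.mul
          (continuous_const.sub continuous_id)).neg).rexp)).intervalIntegrable 0 t
      calc (∫ x in (0:ℝ)..t, Real.exp (I2 t) * (cc x * Real.exp (-I2 x)))
          ≤ ∫ x in (0:ℝ)..t, Mc * K * Real.exp (-(α * (t - x))) :=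
            intervalIntegral.integral_mono_on ht hint1 hint2 hle
        _ = Mc * K * ∫ x in (0:ℝ)..t, Real.exp (-(α * (t - x))) :=
            intervalIntegral.integral_const_mul _ _
        _ ≤ Mc * K * α⁻¹ := by
            apply mul_le_mul_of_nonneg_left (exp_int_bound' hα)
            positivity
    rw [hUdef, hform]
    linarith
  have hplb : ∀ t, 0 ≤ t → U⁻¹ ≤ p t := by
    intro t ht
    have h1 : 0 < u t := inv_pos.2 (hppos t ht)
    have h2 := inv_anti₀ h1 (hubound t ht)
    rwa [hudef, inv_inv] at h2
  -- conclude
  have hcb : Filter.IsCoboundedUnder (· ≥ ·) Filter.atTop p := by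
    apply Filter.IsBoundedUnder.isCoboundedUnder_ge
    refine ⟨1, ?_⟩
    rw [eventually_map, eventually_atTop]
    exact ⟨0, fun t ht => hle1 t ht⟩
  have hliminf : U⁻¹ ≤ Filter.liminf p Filter.atTop := by
    apply Filter.le_liminf_of_le hcb
    rw [eventually_atTop]
    exact ⟨0, fun t ht => hplb t ht⟩
  exact lt_of_lt_of_le (inv_pos.2 hU0) hliminf
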